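/- Let λ be a partition of m, n ≥ 1, and T₀ a standard Young tableau of shape λ with descent composition α. Then, as polynomials in the variables x_1,…,x_n, the sum Σ_T x_1^{γ_1}⋯x_n^{γ_n} over all semistandard Young tableaux T of shape λ with entries at most n and std(T) = T₀, where (γ_1,…,γ_n) = wt(T), equals F_α(x_1,…,x_n). -/

import Mathlib

open scoped Classical

namespace QC

/-- A filling assigns a natural-number entry to each cell `(i, j)`;
entries are `0` outside the shape. Values are 1-based. -/
abbrev Filling : Type := ℕ → ℕ → ℕ

/-- The cell `(i, j)` (row `i`, column `j`, both 0-based) lies in the Young diagram of `lam`. -/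
def InShape (lam : List ℕ) (i j : ℕ) : Prop :=
  i < lam.length ∧ j < lam.getD i 0

/-- The finite set of cells of the Young diagram of `lam`. -/
def cells (lam : List ℕ) : Finset (ℕ × ℕ) :=
  (Finset.range lam.length).biUnion fun i =>
    ({i} : Finset ℕ) ×ˢ Finset.range (lam.getD i 0)

/-- `lam` is a partition of `m`: weakly decreasing, positive parts, summing to `m`. -/
def IsPartitionOf (m : ℕ) (lam : List ℕ) : Prop :=
  lam.Pairwise (· ≥ ·) ∧ (∀ x ∈ lam, 0 < x) ∧ lam.sum = m

/-- `a` is a composition of `m`: positive parts summing to `m`. -/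
def IsCompositionOf (m : ℕ) (a : List ℕ) : Prop :=
  (∀ x ∈ a, 0 < x) ∧ a.sum = m

/-- `T` is a semistandard Young tableau of shape `lam`: positive entries on the shape,
zero off the shape, rows weakly increasing, columns strictly increasing. -/
def IsSSYT (lam : List ℕ) (T : Filling) : Prop :=
  (∀ i j, ¬ InShape lam i j → T i j = 0) ∧
  (∀ i j, InShape lam i j → 0 < T i j) ∧
  (∀ i j1 j2, j1 ≤ j2 → InShape lam i j2 → T i j1 ≤ T i j2) ∧
  (∀ i1 i2 j, i1 < i2 → InShape lam i2 j → T i1 j < T i2 j)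

/-- All entries of `T` are at most `n`. -/
def EntriesLE (n : ℕ) (T : Filling) : Prop := ∀ i j, T i j ≤ n

/-- `T` is a standard Young tableau of shape `lam ⊢ m`: a semistandard tableau in which
each of `1, …, m` appears exactly once. -/
def IsSYT (lam : List ℕ) (m : ℕ) (T : Filling) : Prop :=
  IsSSYT lam T ∧ EntriesLE m T ∧
    ∀ k, 1 ≤ k → k ≤ m → ∃! c : ℕ × ℕ, InShape lam c.1 c.2 ∧ T c.1 c.2 = k

/-- `k` is a descent of the standard tableau `T`: `k + 1` lies in a strictly lower row. -/
def IsDescent (lam : List ℕ) (T : Filling) (k : ℕ) : Prop :=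
  ∃ i1 j1 i2 j2, InShape lam i1 j1 ∧ InShape lam i2 j2 ∧
    T i1 j1 = k ∧ T i2 j2 = k + 1 ∧ i1 < i2

/-- The sorted list of descents of `T`, a standard tableau with `m` cells. -/
noncomputable def descentList (lam : List ℕ) (m : ℕ) (T : Filling) : List ℕ :=
  ((Finset.Ico 1 m).filter fun k => IsDescent lam T k).sort (· ≤ ·)

/-- The number of descents of `T`. -/
noncomputable def numDescents (lam : List ℕ) (m : ℕ) (T : Filling) : ℕ :=
  ((Finset.Ico 1 m).filter fun k => IsDescent lam T k).card

/-- The descent composition `(d₁, d₂ - d₁, …, m - d_{s-1})` of a standard tableau. -/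
noncomputable def desComp (lam : List ℕ) (m : ℕ) (T : Filling) : List ℕ :=
  if m = 0 then [] else
    List.zipWith (· - ·) (descentList lam m T ++ [m]) (0 :: descentList lam m T)

/-- The number of cells of `T` carrying the entry `v`. -/
def countEq (lam : List ℕ) (T : Filling) (v : ℕ) : ℕ :=
  ((cells lam).filter fun c => T c.1 c.2 = v).card

/-- The weight of `T` as a list `(γ₁, …, γₙ)`, `γᵢ` the number of entries equal to `i`. -/
def wt (lam : List ℕ) (n : ℕ) (T : Filling) : List ℕ :=
  (List.range n).map fun v => countEq lam T (v + 1)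

/-- The standardization of `T`: cells are relabelled `1, …, m` in order of increasing entry,
breaking ties between equal entries by increasing column index. -/
noncomputable def stdize (lam : List ℕ) (T : Filling) : Filling := fun i j =>
  if InShape lam i j then
    ((cells lam).filter fun c =>
      T c.1 c.2 < T i j ∨ (T c.1 c.2 = T i j ∧ c.2 ≤ j)).card
  else 0

/-- Given a weak composition `g`, `destValue g k` is the unique `i` with
`g₁ + ⋯ + g_{i-1} < k ≤ g₁ + ⋯ + g_i` (and `0` for `k = 0`). -/
def destValue (g : List ℕ) (k : ℕ) : ℕ :=
  ((List.range g.length).filter fun i => (g.take i).sum < k).length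

/-- The destandardization `D_g(T₀)`: each entry `j` of `T₀` is replaced by the unique `i`
with `g₁ + ⋯ + g_{i-1} < j ≤ g₁ + ⋯ + g_i`. -/
def Dmap (g : List ℕ) (T : Filling) : Filling := fun i j => destValue g (T i j)

/-- `Refines a b`: the composition `b` refines `a`, i.e. `b` can be cut into consecutive
blocks whose sums are the parts of `a` in order. -/
def Refines (a b : List ℕ) : Prop :=
  ∃ L : List (List ℕ), L.flatten = b ∧ L.map List.sum = a

/-- Strict lexicographic order on integer sequences. -/
def lexLt (a b : List ℕ) : Prop := List.Lex (· < ·) a b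

/-- Weak lexicographic order on integer sequences. -/
def lexLe (a b : List ℕ) : Prop := a = b ∨ lexLt a b

/-- The largest entry of `T`. -/
def maxEntry (lam : List ℕ) (T : Filling) : ℕ :=
  (cells lam).sup fun c => T c.1 c.2

/-- The weight of `T` (over all values), with zero parts deleted. -/
def wtFull (lam : List ℕ) (T : Filling) : List ℕ :=
  ((List.range (maxEntry lam T)).map fun v => countEq lam T (v + 1)).filter (· ≠ 0)

/-- The proper partial sums `α₁, α₁ + α₂, …, α₁ + ⋯ + α_{s-1}` of a composition. -/
def innerSums (a : List ℕ) : List ℕ :=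
  (List.range a.length).tail.map fun t => (a.take t).sum

/-- `f : Fin m → Fin n` encodes a sequence `1 ≤ i₁ ≤ i₂ ≤ … ≤ i_m ≤ n` (via `i_t = f (t-1) + 1`)
which ascends strictly, `i_j < i_{j+1}`, at every proper partial sum `j` of `a`. -/
def IsFWord (m n : ℕ) (a : List ℕ) (f : Fin m → Fin n) : Prop :=
  Monotone f ∧
    ∀ (t : ℕ) (ht : t + 1 < m), (t + 1) ∈ innerSums a →
      f ⟨t, Nat.lt_of_succ_lt ht⟩ < f ⟨t + 1, ht⟩

/-- The fundamental quasisymmetric polynomial `F_a(x₁, …, xₙ)` of degree `m`. -/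
noncomputable def Fpoly (m n : ℕ) (a : List ℕ) : MvPolynomial (Fin n) ℤ :=
  ∑ f ∈ Finset.univ.filter (fun f : Fin m → Fin n => IsFWord m n a f),
    ∏ t : Fin m, MvPolynomial.X (f t)

/-- The monomial `x₁^{γ₁} ⋯ xₙ^{γₙ}` of a tableau `T` of weight `γ`. -/
noncomputable def wtMonomial (lam : List ℕ) (n : ℕ) (T : Filling) :
    MvPolynomial (Fin n) ℤ :=
  ∏ i : Fin n, MvPolynomial.X i ^ countEq lam T (i.val + 1)

/-- `Rot` of a word `w` of length `k` on `{1, …, n}`: the `j`-th letter of `rot k n w`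
is `n + 1 - w_{k+1-j}` (1-based), here written 0-based. -/
def rot (k n : ℕ) (w : Fin k → ℕ) : Fin k → ℕ := fun j =>
  n + 1 - w ⟨k - 1 - j.val, by have := j.isLt; omega⟩

/-- The descent set of a word `w = w₁ ⋯ w_k`: positions `i ∈ {1, …, k-1}` with `wᵢ > w_{i+1}`
(1-based positions; `w ⟨i-1,_⟩` is `wᵢ`). -/
noncomputable def wordDes (k : ℕ) (w : Fin k → ℕ) : Finset ℕ :=
  (Finset.Ico 1 k).filter fun i =>
    ∃ (h1 : i - 1 < k) (h2 : i < k), w ⟨i, h2⟩ < w ⟨i - 1, h1⟩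

/-- The descent composition of a word of length `k`. -/
noncomputable def wordDesComp (k : ℕ) (w : Fin k → ℕ) : List ℕ :=
  if k = 0 then []
  else
    List.zipWith (· - ·) ((wordDes k w).sort (· ≤ ·) ++ [k])
      (0 :: (wordDes k w).sort (· ≤ ·))

/- AUX BLOCK -/
lemma mem_cells {lam : List ℕ} {c : ℕ × ℕ} : c ∈ cells lam ↔ InShape lam c.1 c.2 := by
  obtain ⟨i, j⟩ := c
  simp only [cells, Finset.mem_biUnion, Finset.mem_range, Finset.mem_product,
    Finset.mem_singleton, InShape]
  constructor
  · rintro ⟨a, ha, rfl, hj⟩; exact ⟨ha, hj⟩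
  · rintro ⟨hi, hj⟩; exact ⟨i, hi, rfl, hj⟩

lemma teles : ∀ (D : List ℕ) (prev M t : ℕ), List.Chain (· ≤ ·) prev (D ++ [M]) → t ≤ D.length + 1 →
    prev + ((List.zipWith (· - ·) (D ++ [M]) (prev :: D)).take t).sum
      = ((prev :: D) ++ [M]).getD t 0 := by
  intro D
  induction D with
  | nil =>
    intro prev M t hch ht
    have hpM : prev ≤ M := by
      rw [List.nil_append, List.Chain, List.isChain_cons_cons] at hch; exact hch.1
    match t, ht with
    | 0, _ => simp
    | 1, _ => simp; omega
  | cons a D ih =>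
    intro prev M t hch ht
    rw [List.cons_append, List.Chain, List.isChain_cons_cons] at hch
    match t, ht with
    | 0, _ => simp
    | (s+1), ht =>
      have := ih a M s hch.2 (by simpa using Nat.lt_succ_iff.mp ht)
      simp only [List.cons_append, List.zipWith_cons_cons, List.take_succ_cons,
        List.sum_cons, List.getD_cons_succ]
      rw [List.cons_append] at this
      omega

lemma mem_innerSums_zip (m : ℕ) (D : List ℕ) (hs : D.Pairwise (· ≤ ·))
    (hmem : ∀ x ∈ D, 1 ≤ x ∧ x < m) (k : ℕ) :
    k ∈ innerSums (List.zipWith (· - ·) (D ++ [m]) (0 :: D)) ↔ k ∈ D := by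
  have hch : List.Chain (· ≤ ·) 0 (D ++ [m]) := by
    rw [List.Chain, List.isChain_iff_pairwise, List.pairwise_cons]
    constructor
    · intro a _; exact Nat.zero_le a
    · rw [List.pairwise_append]
      refine ⟨hs, List.pairwise_singleton _ _, ?_⟩
      intro a ha b hb
      simp only [List.mem_singleton] at hb
      subst hb
      exact le_of_lt (hmem a ha).2
  have hlen : (List.zipWith (· - ·) (D ++ [m]) (0 :: D)).length = D.length + 1 := by
    simp [List.length_zipWith]
  have htake : ∀ i, i < D.length →
      ((List.zipWith (· - ·) (D ++ [m]) (0 :: D)).take (i+1)).sum = D.getD i 0 := by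
    intro i hi
    have := teles D 0 m (i+1) hch (by omega)
    rw [Nat.zero_add] at this
    rw [this, List.cons_append, List.getD_cons_succ, List.getD_append _ _ _ _ hi]
  rw [innerSums, hlen, List.range_succ_eq_map, List.tail_cons, List.map_map]
  simp only [List.mem_map, List.mem_range, Function.comp]
  constructor
  · rintro ⟨i, hi, rfl⟩
    rw [htake i hi, List.getD_eq_getElem _ _ hi]
    exact List.getElem_mem _
  · intro hk
    obtain ⟨i, hi, hik⟩ := List.mem_iff_getElem.mp hk
    exact ⟨i, hi, by rw [htake i hi, List.getD_eq_getElem _ _ hi, hik]⟩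

lemma mem_innerSums_desComp {m : ℕ} {lam : List ℕ} {T₀ : Filling} (k : ℕ)
    (h1 : 1 ≤ k) (h2 : k < m) :
    k ∈ innerSums (desComp lam m T₀) ↔ IsDescent lam T₀ k := by
  have hm : m ≠ 0 := by omega
  have hside : ∀ x ∈ descentList lam m T₀, 1 ≤ x ∧ x < m := by
    intro x hx
    rw [descentList, Finset.mem_sort, Finset.mem_filter, Finset.mem_Ico] at hx
    exact ⟨hx.1.1, hx.1.2⟩
  rw [desComp, if_neg hm,
    mem_innerSums_zip m (descentList lam m T₀) (Finset.pairwise_sort _ _) hside,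
    descentList, Finset.mem_sort, Finset.mem_filter, Finset.mem_Ico]
  constructor
  · exact fun h => h.2
  · exact fun h => ⟨⟨h1, h2⟩, h⟩

section SYTFacts

variable {m n : ℕ} {lam : List ℕ} {T₀ : Filling}

noncomputable def cellOf (hT₀ : IsSYT lam m T₀) (k : Fin m) : ℕ × ℕ :=
  (hT₀.2.2 (k.1 + 1) (by omega) (by have := k.isLt; omega)).exists.choose

lemma cellOf_spec (hT₀ : IsSYT lam m T₀) (k : Fin m) :
    InShape lam (cellOf hT₀ k).1 (cellOf hT₀ k).2 ∧
      T₀ (cellOf hT₀ k).1 (cellOf hT₀ k).2 = k.1 + 1 :=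
  (hT₀.2.2 (k.1 + 1) (by omega) (by have := k.isLt; omega)).exists.choose_spec

lemma cellOf_unique (hT₀ : IsSYT lam m T₀) (k : Fin m) {c : ℕ × ℕ}
    (hc : InShape lam c.1 c.2) (hv : T₀ c.1 c.2 = k.1 + 1) : c = cellOf hT₀ k :=
  (hT₀.2.2 (k.1 + 1) (by omega) (by have := k.isLt; omega)).unique ⟨hc, hv⟩ (cellOf_spec hT₀ k)

lemma card_le_val (hT₀ : IsSYT lam m T₀) (v : ℕ) (hv : v ≤ m) :
    ((cells lam).filter fun c => T₀ c.1 c.2 ≤ v).card = v := by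
  conv_rhs => rw [← Finset.card_range v]
  apply Finset.card_bij' (fun c _ => T₀ c.1 c.2 - 1)
      (fun i hi => cellOf hT₀ ⟨i, by rw [Finset.mem_range] at hi; omega⟩)
  case hi =>
    intro c hc
    rw [Finset.mem_filter] at hc
    have := hT₀.1.2.1 c.1 c.2 (mem_cells.mp hc.1)
    rw [Finset.mem_range]
    omega
  case hj =>
    intro i hi
    rw [Finset.mem_range] at hi
    rw [Finset.mem_filter]
    obtain ⟨h1, h2⟩ := cellOf_spec hT₀ ⟨i, by omega⟩
    exact ⟨mem_cells.mpr h1, by rw [h2]; exact hi⟩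
  case left_inv =>
    intro c hc
    rw [Finset.mem_filter] at hc
    have hpos := hT₀.1.2.1 c.1 c.2 (mem_cells.mp hc.1)
    exact (cellOf_unique hT₀ _ (mem_cells.mp hc.1) (by simp; omega)).symm
  case right_inv =>
    intro i hi
    rw [Finset.mem_range] at hi
    have h' : T₀ (cellOf hT₀ (⟨i, by omega⟩ : Fin m)).1
        (cellOf hT₀ (⟨i, by omega⟩ : Fin m)).2 = i + 1 :=
      (cellOf_spec hT₀ (⟨i, by omega⟩ : Fin m)).2
    omega

lemma colA (hT₀ : IsSYT lam m T₀) {i1 j1 i2 j2 : ℕ} (h1 : InShape lam i1 j1)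
    (h2 : InShape lam i2 j2) (hval : T₀ i2 j2 = T₀ i1 j1 + 1) (hrow : i2 ≤ i1) : j1 < j2 := by
  by_contra hcon
  push_neg at hcon
  have hsh : InShape lam i1 j2 := ⟨h1.1, by have := h1.2; omega⟩
  have hr : T₀ i1 j2 ≤ T₀ i1 j1 := hT₀.1.2.2.1 i1 j2 j1 hcon h1
  rcases Nat.lt_or_ge i2 i1 with hlt | hge
  · have hc : T₀ i2 j2 < T₀ i1 j2 := hT₀.1.2.2.2 i2 i1 j2 hlt hsh
    omega
  · have : i2 = i1 := le_antisymm hrow hge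
    subst this
    omega

lemma colChain (hT₀ : IsSYT lam m T₀) : ∀ (g : ℕ) {i1 j1 i2 j2 : ℕ},
    InShape lam i1 j1 → InShape lam i2 j2 → T₀ i2 j2 = T₀ i1 j1 + g + 1 →
    (∀ k, T₀ i1 j1 ≤ k → k < T₀ i2 j2 → ¬ IsDescent lam T₀ k) → j1 < j2 := by
  intro g
  induction g with
  | zero =>
    intro i1 j1 i2 j2 h1 h2 hval hnd
    have hk := hnd (T₀ i1 j1) le_rfl (by omega)
    have hrow : i2 ≤ i1 := by
      by_contra hc
      push_neg at hc
      exact hk ⟨i1, j1, i2, j2, h1, h2, rfl, by omega, hc⟩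
    exact colA hT₀ h1 h2 (by omega) hrow
  | succ g ih =>
    intro i1 j1 i2 j2 h1 h2 hval hnd
    have hm : T₀ i1 j1 + g + 1 ≤ m := by have := hT₀.2.1 i2 j2; omega
    have hcs := cellOf_spec hT₀ ⟨T₀ i1 j1 + g, by omega⟩
    obtain ⟨hcin, hcval⟩ := hcs
    have hcval' : T₀ (cellOf hT₀ ⟨T₀ i1 j1 + g, by omega⟩).1
        (cellOf hT₀ ⟨T₀ i1 j1 + g, by omega⟩).2 = T₀ i1 j1 + g + 1 := hcval
    have h1' : j1 < (cellOf hT₀ ⟨T₀ i1 j1 + g, by omega⟩).2 :=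
      ih h1 hcin hcval' (fun k' hk1 hk2 => hnd k' hk1 (by omega))
    have hk2 := hnd (T₀ i1 j1 + g + 1) (by omega) (by omega)
    have hrow : i2 ≤ (cellOf hT₀ ⟨T₀ i1 j1 + g, by omega⟩).1 := by
      by_contra hc
      push_neg at hc
      exact hk2 ⟨_, _, i2, j2, hcin, h2, hcval', by omega, hc⟩
    have := colA hT₀ hcin h2 (by omega) hrow
    omega

lemma colB {T : Filling} (hT : IsSSYT lam T) {i1 j1 i2 j2 : ℕ}
    (h1 : InShape lam i1 j1) (h2 : InShape lam i2 j2)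
    (hval : T i1 j1 = T i2 j2) (hrow : i1 < i2) : j2 < j1 := by
  by_contra hcon
  push_neg at hcon
  have hsh : InShape lam i2 j1 := ⟨h2.1, by have := h2.2; omega⟩
  have hc := hT.2.2.2 i1 i2 j1 hrow hsh
  have hr := hT.2.2.1 i2 j1 j2 hcon h2
  omega

lemma rank_le (T : Filling) {c c' : ℕ × ℕ}
    (hc' : InShape lam c'.1 c'.2) (hc : InShape lam c.1 c.2)
    (h : T c'.1 c'.2 < T c.1 c.2 ∨ (T c'.1 c'.2 = T c.1 c.2 ∧ c'.2 ≤ c.2)) :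
    stdize lam T c'.1 c'.2 ≤ stdize lam T c.1 c.2 := by
  simp only [stdize, if_pos hc, if_pos hc']
  apply Finset.card_le_card
  intro d hd
  rw [Finset.mem_filter] at hd ⊢
  refine ⟨hd.1, ?_⟩
  rcases hd.2 with h1 | h1 <;> rcases h with h2 | h2
  · left; omega
  · left; omega
  · left; omega
  · right; exact ⟨by omega, le_trans h1.2 h2.2⟩

lemma rank_lt (T : Filling) {c c' : ℕ × ℕ}
    (hc' : InShape lam c'.1 c'.2) (hc : InShape lam c.1 c.2)
    (h : stdize lam T c'.1 c'.2 < stdize lam T c.1 c.2) :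
    T c'.1 c'.2 < T c.1 c.2 ∨ (T c'.1 c'.2 = T c.1 c.2 ∧ c'.2 < c.2) := by
  by_contra hcon
  push_neg at hcon
  have : T c.1 c.2 < T c'.1 c'.2 ∨ (T c.1 c.2 = T c'.1 c'.2 ∧ c.2 ≤ c'.2) := by
    rcases Nat.lt_trichotomy (T c.1 c.2) (T c'.1 c'.2) with h' | h' | h'
    · left; exact h'
    · right; exact ⟨h', hcon.2 h'.symm⟩
    · exact absurd h' (by omega)
  exact absurd (rank_le T hc hc' this) (by omega)

end SYTFacts

section Fiber

variable {m n : ℕ} {lam : List ℕ} {T₀ : Filling}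

/-- Total extension of `f : Fin m → Fin n` to `ℕ`, with 1-based values. -/
def extF (m n : ℕ) (f : Fin m → Fin n) : ℕ → ℕ := fun v =>
  if h : v < m then (f ⟨v, h⟩).val + 1 else n + 1

lemma extF_coe (f : Fin m → Fin n) (k : Fin m) : extF m n f k.val = (f k).val + 1 := by
  simp [extF, k.isLt]

lemma extF_pos (f : Fin m → Fin n) (v : ℕ) : 1 ≤ extF m n f v := by
  unfold extF
  split <;> omega

lemma extF_le (f : Fin m → Fin n) {v : ℕ} (h : v < m) : extF m n f v ≤ n := by
  unfold extF
  rw [dif_pos h]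
  exact (f ⟨v, h⟩).isLt

lemma extF_mono (f : Fin m → Fin n) (hmono : Monotone f) : Monotone (extF m n f) := by
  intro a b hab
  unfold extF
  by_cases ha : a < m
  · rw [dif_pos ha]
    by_cases hb : b < m
    · rw [dif_pos hb]
      have : f ⟨a, ha⟩ ≤ f ⟨b, hb⟩ := hmono (by exact hab)
      omega
    · rw [dif_neg hb]
      have := (f ⟨a, ha⟩).isLt
      omega
  · rw [dif_neg ha, dif_neg (by omega)]

noncomputable def Tof (m n : ℕ) (lam : List ℕ) (T₀ : Filling) (f : Fin m → Fin n) :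
    Filling := fun i j =>
  if InShape lam i j then extF m n f (T₀ i j - 1) else 0

lemma Tof_off (f : Fin m → Fin n) {i j : ℕ} (h : ¬ InShape lam i j) :
    Tof m n lam T₀ f i j = 0 := by
  simp only [Tof, if_neg h]

lemma Tof_on (f : Fin m → Fin n) {i j : ℕ} (h : InShape lam i j) :
    Tof m n lam T₀ f i j = extF m n f (T₀ i j - 1) := by
  simp only [Tof, if_pos h]

lemma Tof_inj (hT₀ : IsSYT lam m T₀) {f f' : Fin m → Fin n}
    (h : Tof m n lam T₀ f = Tof m n lam T₀ f') : f = f' := by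
  funext k
  obtain ⟨hin, hval⟩ := cellOf_spec hT₀ k
  have h1 := congrFun (congrFun h (cellOf hT₀ k).1) (cellOf hT₀ k).2
  rw [Tof_on f hin, Tof_on f' hin, hval, Nat.add_sub_cancel, extF_coe, extF_coe] at h1
  exact Fin.ext (by omega)

lemma Tof_mem_fiber (hT₀ : IsSYT lam m T₀) {f : Fin m → Fin n}
    (hmono : Monotone f)
    (hstrict : ∀ k : ℕ, 1 ≤ k → k < m → IsDescent lam T₀ k →
        extF m n f (k - 1) < extF m n f k) :
    IsSSYT lam (Tof m n lam T₀ f) ∧ EntriesLE n (Tof m n lam T₀ f) ∧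
      stdize lam (Tof m n lam T₀ f) = T₀ := by
  have hub : ∀ i j, InShape lam i j → T₀ i j ≤ m := fun i j _ => hT₀.2.1 i j
  have hlb : ∀ i j, InShape lam i j → 1 ≤ T₀ i j := fun i j h => hT₀.1.2.1 i j h
  have hmE := extF_mono f hmono
  -- strict increase of extF across a range containing a descent
  have hcross : ∀ u v : ℕ, 1 ≤ u → u < v → v ≤ m →
      (∃ k, u ≤ k ∧ k < v ∧ IsDescent lam T₀ k) →
      extF m n f (u - 1) < extF m n f (v - 1) := by
    intro u v hu huv hv hex
    obtain ⟨k, hk1, hk2, hkd⟩ := hex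
    have hs := hstrict k (by omega) (by omega) hkd
    have m1 : extF m n f (u - 1) ≤ extF m n f (k - 1) := hmE (by omega)
    have m2 : extF m n f k ≤ extF m n f (v - 1) := hmE (by omega)
    omega
  -- existence of a descent between values of non-column-increasing cells
  have hdesc_col : ∀ {i1 j1 i2 j2 : ℕ}, InShape lam i1 j1 → InShape lam i2 j2 →
      T₀ i1 j1 < T₀ i2 j2 → ¬ (j1 < j2) →
      ∃ k, T₀ i1 j1 ≤ k ∧ k < T₀ i2 j2 ∧ IsDescent lam T₀ k := by
    intro i1 j1 i2 j2 h1 h2 hlt hj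
    by_contra hall
    push_neg at hall
    exact hj (colChain hT₀ (T₀ i2 j2 - T₀ i1 j1 - 1) h1 h2 (by omega)
      (fun k ha hb => hall k ha hb))
  -- no descent in range when extF values coincide
  have hnod : ∀ u v : ℕ, 1 ≤ u → u < v → v ≤ m →
      extF m n f (u - 1) = extF m n f (v - 1) →
      ∀ k, u ≤ k → k < v → ¬ IsDescent lam T₀ k := by
    intro u v hu huv hv heq k hk1 hk2 hkd
    have := hcross u v hu huv hv ⟨k, hk1, hk2, hkd⟩
    omega
  refine ⟨⟨?_, ?_, ?_, ?_⟩, ?_, ?_⟩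
  · intro i j h; exact Tof_off f h
  · intro i j h
    rw [Tof_on f h]
    exact extF_pos f _
  · -- rows weakly increase
    intro i j1 j2 hj h2
    by_cases h1 : InShape lam i j1
    · rw [Tof_on f h1, Tof_on f h2]
      have hT : T₀ i j1 ≤ T₀ i j2 := hT₀.1.2.2.1 i j1 j2 hj h2
      exact hmE (by omega)
    · rw [Tof_off f h1]; omega
  · -- columns strictly increase
    intro i1 i2 j hi h2
    by_cases h1 : InShape lam i1 j
    · rw [Tof_on f h1, Tof_on f h2]
      have hT : T₀ i1 j < T₀ i2 j := hT₀.1.2.2.2 i1 i2 j hi h2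
      exact hcross _ _ (hlb _ _ h1) hT (hub _ _ h2) (hdesc_col h1 h2 hT (by omega))
    · rw [Tof_off f h1, Tof_on f h2]
      exact extF_pos f _
  · -- entries at most n
    intro i j
    by_cases h : InShape lam i j
    · rw [Tof_on f h]
      have := hub i j h
      have := hlb i j h
      exact extF_le f (by omega)
    · rw [Tof_off f h]; omega
  · -- standardization is T₀
    funext i j
    by_cases h : InShape lam i j
    · have hfe : ((cells lam).filter fun d =>
          Tof m n lam T₀ f d.1 d.2 < Tof m n lam T₀ f i j ∨
            (Tof m n lam T₀ f d.1 d.2 = Tof m n lam T₀ f i j ∧ d.2 ≤ j))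
          = (cells lam).filter fun d => T₀ d.1 d.2 ≤ T₀ i j := by
        apply Finset.filter_congr
        intro d hd
        have hdin := mem_cells.mp hd
        rw [Tof_on f hdin, Tof_on f h]
        have hubd := hub _ _ hdin; have hlbd := hlb _ _ hdin
        have hubc := hub i j h; have hlbc := hlb i j h
        rcases Nat.lt_trichotomy (T₀ d.1 d.2) (T₀ i j) with hlt | heq | hgt
        · refine iff_of_true ?_ (by omega)
          have hab : extF m n f (T₀ d.1 d.2 - 1) ≤ extF m n f (T₀ i j - 1) :=
            hmE (by omega)
          rcases Nat.lt_or_ge (extF m n f (T₀ d.1 d.2 - 1)) (extF m n f (T₀ i j - 1))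
            with hab' | hab'
          · exact Or.inl hab'
          · right
            refine ⟨by omega, le_of_lt ?_⟩
            exact colChain hT₀ (T₀ i j - T₀ d.1 d.2 - 1) hdin h (by omega)
              (hnod _ _ (by omega) hlt (by omega) (by omega))
        · have hdc : d = (i, j) := by
            have hkm : T₀ i j - 1 < m := by omega
            have h1 : d = cellOf hT₀ ⟨T₀ i j - 1, hkm⟩ :=
              cellOf_unique hT₀ _ hdin (by simp; omega)
            have h2 : (i, j) = cellOf hT₀ ⟨T₀ i j - 1, hkm⟩ :=
              cellOf_unique hT₀ _ h (by simp; omega)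
            rw [h1, h2]
          have he : d.1 = i ∧ d.2 = j := by rw [hdc]; exact ⟨rfl, rfl⟩
          refine iff_of_true ?_ (by omega)
          right
          rw [he.1, he.2]
          exact ⟨rfl, le_rfl⟩
        · refine iff_of_false ?_ (by omega)
          have hba : extF m n f (T₀ i j - 1) ≤ extF m n f (T₀ d.1 d.2 - 1) :=
            hmE (by omega)
          intro hcon
          rcases hcon with hc | hc
          · omega
          · have hcol := colChain hT₀ (T₀ d.1 d.2 - T₀ i j - 1) h hdin (by omega)
              (hnod _ _ (by omega) hgt (by omega) (by omega))
            omega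
      have hcard := card_le_val hT₀ (T₀ i j) (hub i j h)
      simp only [stdize, if_pos h]
      rw [hfe, hcard]
    · simp only [stdize, if_neg h]
      exact (hT₀.1.1 i j h).symm

end Fiber

section Backward

variable {m n : ℕ} {lam : List ℕ} {T₀ : Filling}

noncomputable def fOf (m n : ℕ) (lam : List ℕ) (T₀ : Filling) (hT₀ : IsSYT lam m T₀)
    (hn : 1 ≤ n) (T : Filling) : Fin m → Fin n := fun k =>
  ⟨min (T (cellOf hT₀ k).1 (cellOf hT₀ k).2 - 1) (n - 1), by omega⟩

lemma fOf_val (hT₀ : IsSYT lam m T₀) (hn : 1 ≤ n) {T : Filling} (hT : IsSSYT lam T)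
    (hle : EntriesLE n T) (k : Fin m) :
    (fOf m n lam T₀ hT₀ hn T k).val = T (cellOf hT₀ k).1 (cellOf hT₀ k).2 - 1 := by
  have h1 := hT.2.1 _ _ (cellOf_spec hT₀ k).1
  have h2 := hle (cellOf hT₀ k).1 (cellOf hT₀ k).2
  simp only [fOf]
  omega

lemma countEq_Tof (hT₀ : IsSYT lam m T₀) (f : Fin m → Fin n) (i : Fin n) :
    countEq lam (Tof m n lam T₀ f) (i.val + 1)
      = (Finset.univ.filter fun t => f t = i).card := by
  rw [countEq]
  apply Finset.card_bij'
      (fun c hc => (⟨T₀ c.1 c.2 - 1, by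
        rw [Finset.mem_filter] at hc
        have h1 := mem_cells.mp hc.1
        have := hT₀.2.1 c.1 c.2
        have := hT₀.1.2.1 c.1 c.2 h1
        omega⟩ : Fin m))
      (fun t _ => cellOf hT₀ t)
  case hi =>
    intro c hc
    rw [Finset.mem_filter] at hc ⊢
    refine ⟨Finset.mem_univ _, ?_⟩
    have h1 := mem_cells.mp hc.1
    have h2 := hc.2
    rw [Tof_on f h1] at h2
    have hlt : T₀ c.1 c.2 - 1 < m := by
      have := hT₀.2.1 c.1 c.2
      have := hT₀.1.2.1 c.1 c.2 h1
      omega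
    rw [show extF m n f (T₀ c.1 c.2 - 1) = (f ⟨T₀ c.1 c.2 - 1, hlt⟩).val + 1 from by
      simp only [extF, dif_pos hlt]] at h2
    exact Fin.ext (by omega)
  case hj =>
    intro t ht
    rw [Finset.mem_filter]
    obtain ⟨hin, hval⟩ := cellOf_spec hT₀ t
    refine ⟨mem_cells.mpr hin, ?_⟩
    rw [Tof_on f hin, hval, Nat.add_sub_cancel, extF_coe,
      (Finset.mem_filter.mp ht).2]
  case left_inv =>
    intro c hc
    rw [Finset.mem_filter] at hc
    have h1 := mem_cells.mp hc.1
    have := hT₀.1.2.1 c.1 c.2 h1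
    exact (cellOf_unique hT₀ _ h1 (by simp; omega)).symm
  case right_inv =>
    intro t _
    have := (cellOf_spec hT₀ t).2
    exact Fin.ext (by simp; omega)

lemma wtMonomial_Tof (hT₀ : IsSYT lam m T₀) (f : Fin m → Fin n) :
    wtMonomial lam n (Tof m n lam T₀ f) = ∏ t : Fin m, MvPolynomial.X (f t) := by
  rw [wtMonomial,
    ← Finset.prod_fiberwise Finset.univ f
      (fun t => (MvPolynomial.X (f t) : MvPolynomial (Fin n) ℤ))]
  apply Finset.prod_congr rfl
  intro i _
  rw [countEq_Tof hT₀ f i,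
    Finset.prod_congr rfl (fun t ht =>
      by rw [(Finset.mem_filter.mp ht).2] :
        ∀ t ∈ Finset.univ.filter fun t => f t = i,
          (MvPolynomial.X (f t) : MvPolynomial (Fin n) ℤ) = MvPolynomial.X i),
    Finset.prod_const]

lemma fiber_to_fword (hT₀ : IsSYT lam m T₀) (hn : 1 ≤ n) {T : Filling} (hT : IsSSYT lam T)
    (hle : EntriesLE n T) (hstd : stdize lam T = T₀) :
    Monotone (fOf m n lam T₀ hT₀ hn T) ∧
      ∀ a b : Fin m, a.val + 1 = b.val → IsDescent lam T₀ b.val →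
        fOf m n lam T₀ hT₀ hn T a < fOf m n lam T₀ hT₀ hn T b := by
  have hrank : ∀ a b : Fin m, a.val < b.val →
      T (cellOf hT₀ a).1 (cellOf hT₀ a).2 < T (cellOf hT₀ b).1 (cellOf hT₀ b).2 ∨
        (T (cellOf hT₀ a).1 (cellOf hT₀ a).2 = T (cellOf hT₀ b).1 (cellOf hT₀ b).2 ∧
          (cellOf hT₀ a).2 < (cellOf hT₀ b).2) := by
    intro a b hab
    obtain ⟨ha1, ha2⟩ := cellOf_spec hT₀ a
    obtain ⟨hb1, hb2⟩ := cellOf_spec hT₀ b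
    apply rank_lt T ha1 hb1
    have e1 : stdize lam T (cellOf hT₀ a).1 (cellOf hT₀ a).2 = a.val + 1 := by
      rw [hstd]; exact ha2
    have e2 : stdize lam T (cellOf hT₀ b).1 (cellOf hT₀ b).2 = b.val + 1 := by
      rw [hstd]; exact hb2
    omega
  have hstep : ∀ (k : ℕ) (h : k + 1 < m),
      fOf m n lam T₀ hT₀ hn T ⟨k, by omega⟩ ≤ fOf m n lam T₀ hT₀ hn T ⟨k + 1, h⟩ := by
    intro k h
    have hr := hrank ⟨k, by omega⟩ ⟨k + 1, h⟩ (by simp)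
    have va := fOf_val hT₀ hn hT hle (⟨k, by omega⟩ : Fin m)
    have vb := fOf_val hT₀ hn hT hle (⟨k + 1, h⟩ : Fin m)
    exact Fin.le_def.mpr (by omega)
  constructor
  · have haux : ∀ (d a : ℕ) (ha : a < m) (had : a + d < m),
        fOf m n lam T₀ hT₀ hn T ⟨a, ha⟩ ≤ fOf m n lam T₀ hT₀ hn T ⟨a + d, had⟩ := by
      intro d
      induction d with
      | zero => intro a ha had; exact le_of_eq (congrArg _ (Fin.ext rfl))
      | succ d ih =>
        intro a ha had
        exact le_trans (ih a ha (by omega)) (hstep (a + d) (by omega))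
    intro a b hab
    have h2 := haux (b.val - a.val) a.val a.isLt (by omega)
    simp only [show a.val + (b.val - a.val) = b.val from by omega, Fin.eta] at h2
    exact h2
  · intro a b hab hd
    obtain ⟨i1, j1, i2, j2, hin1, hin2, hv1, hv2, hrow⟩ := hd
    have e1 : (i1, j1) = cellOf hT₀ a := cellOf_unique hT₀ a hin1 (by
      show T₀ i1 j1 = a.val + 1; omega)
    have e2 : (i2, j2) = cellOf hT₀ b := cellOf_unique hT₀ b hin2 (by
      show T₀ i2 j2 = b.val + 1; omega)
    have hr := hrank a b (by omega)
    have r1 : i1 = (cellOf hT₀ a).1 := congrArg Prod.fst e1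
    have c1 : j1 = (cellOf hT₀ a).2 := congrArg Prod.snd e1
    have r2 : i2 = (cellOf hT₀ b).1 := congrArg Prod.fst e2
    have c2 : j2 = (cellOf hT₀ b).2 := congrArg Prod.snd e2
    have va := fOf_val hT₀ hn hT hle a
    have vb := fOf_val hT₀ hn hT hle b
    have hposa := hT.2.1 _ _ (cellOf_spec hT₀ a).1
    rcases hr with hlt | ⟨heq, hcol⟩
    · exact Fin.lt_def.mpr (by omega)
    · exfalso
      have hrow' : (cellOf hT₀ a).1 < (cellOf hT₀ b).1 := by rw [← r1, ← r2]; exact hrow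
      have := colB hT (cellOf_spec hT₀ a).1 (cellOf_spec hT₀ b).1 heq hrow'
      omega

lemma Tof_fOf (hT₀ : IsSYT lam m T₀) (hn : 1 ≤ n) {T : Filling} (hT : IsSSYT lam T)
    (hle : EntriesLE n T) :
    Tof m n lam T₀ (fOf m n lam T₀ hT₀ hn T) = T := by
  funext i j
  by_cases h : InShape lam i j
  · rw [Tof_on _ h]
    have hub := hT₀.2.1 i j
    have hlb := hT₀.1.2.1 i j h
    have hkm : T₀ i j - 1 < m := by omega
    have hcell : (i, j) = cellOf hT₀ ⟨T₀ i j - 1, hkm⟩ :=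
      cellOf_unique hT₀ _ h (by simp; omega)
    have he : extF m n (fOf m n lam T₀ hT₀ hn T) (T₀ i j - 1)
        = (fOf m n lam T₀ hT₀ hn T ⟨T₀ i j - 1, hkm⟩).val + 1 := by
      simp only [extF, dif_pos hkm]
    rw [he, fOf_val hT₀ hn hT hle, ← hcell]
    have hpos : 1 ≤ T i j := hT.2.1 i j h
    show T i j - 1 + 1 = T i j
    omega
  · rw [Tof_off _ h]
    exact (hT.1 i j h).symm

end Backward

/-- For a standard Young tableau `T₀` of shape `lam ⊢ m` with descent composition `alpha`,
the sum of the weight monomials `x₁^{γ₁} ⋯ xₙ^{γₙ}` over all semistandard tableaux of shape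
`lam` with entries at most `n` standardizing to `T₀` equals `F_alpha(x₁, …, xₙ)`. -/
theorem sum_monomials_over_fiber_eq_Fpoly (m n : ℕ) (hn : 1 ≤ n) (lam : List ℕ)
    (hlam : IsPartitionOf m lam) (T₀ : Filling) (hT₀ : IsSYT lam m T₀) :
    ∑ᶠ T : {T : Filling // IsSSYT lam T ∧ EntriesLE n T ∧ stdize lam T = T₀},
        wtMonomial lam n T.val =
      Fpoly m n (desComp lam m T₀) := by
  classical
  set S : Finset (Fin m → Fin n) :=
    Finset.univ.filter (fun f : Fin m → Fin n => IsFWord m n (desComp lam m T₀) f) with hS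
  have hmem : ∀ T : Filling,
      (IsSSYT lam T ∧ EntriesLE n T ∧ stdize lam T = T₀) ↔
        T ∈ S.image (Tof m n lam T₀) := by
    intro T
    constructor
    · rintro ⟨hT, hle, hstd⟩
      rw [Finset.mem_image]
      obtain ⟨hmono, hstrictF⟩ := fiber_to_fword hT₀ hn hT hle hstd
      refine ⟨fOf m n lam T₀ hT₀ hn T, ?_, Tof_fOf hT₀ hn hT hle⟩
      rw [hS, Finset.mem_filter]
      refine ⟨Finset.mem_univ _, hmono, ?_⟩
      intro t ht hmem'
      exact hstrictF ⟨t, by omega⟩ ⟨t + 1, ht⟩ rfl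
        ((mem_innerSums_desComp (t + 1) (by omega) ht).mp hmem')
    · intro hT
      rw [Finset.mem_image] at hT
      obtain ⟨f, hfS, rfl⟩ := hT
      rw [hS, Finset.mem_filter] at hfS
      obtain ⟨-, hmono, hstrict⟩ := hfS
      apply Tof_mem_fiber hT₀ hmono
      intro k h1 h2 hd
      have hk' : k - 1 + 1 = k := by omega
      have hs := hstrict (k - 1) (by omega)
        (by rw [hk']; exact (mem_innerSums_desComp k h1 h2).mpr hd)
      simp only [hk'] at hs
      have e1 : extF m n f (k - 1) = (f ⟨k - 1, by omega⟩).val + 1 := by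
        simp only [extF, dif_pos (show k - 1 < m by omega)]
      have e2 : extF m n f k = (f ⟨k, by omega⟩).val + 1 := by
        simp only [extF, dif_pos (show k < m by omega)]
      rw [e1, e2]
      exact Nat.succ_lt_succ hs
  rw [finsum_subtype_eq_finsum_cond]
  have h1 : ∑ᶠ (T : Filling) (_ : IsSSYT lam T ∧ EntriesLE n T ∧ stdize lam T = T₀),
      wtMonomial lam n T
      = ∑ᶠ T ∈ ((S.image (Tof m n lam T₀) : Finset Filling) : Set Filling),
          wtMonomial lam n T := by
    apply finsum_congr
    intro T
    have hp : (IsSSYT lam T ∧ EntriesLE n T ∧ stdize lam T = T₀)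
        = (T ∈ ((S.image (Tof m n lam T₀) : Finset Filling) : Set Filling)) := by
      rw [Finset.mem_coe]
      exact propext (hmem T)
    rw [hp]
  rw [h1, finsum_mem_coe_finset,
    Finset.sum_image (fun x _ y _ h => Tof_inj hT₀ h),
    Finset.sum_congr rfl (fun f _ => wtMonomial_Tof hT₀ f)]
  rw [Fpoly, hS]


end QC
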